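/- Consider the cooperative learning protocol with l = 1 (so μ ∈ ℝ and all v_i(t) ∈ ℝ) started at an initial time t₀ with deterministic initial values v_1(t₀), …, v_n(t₀). Fix an integer t₁ > t₀ and assume: Δ(m) ∈ (0,1) for every m with t₀ ≤ m < t₁; the graph on {1,…,n} with edge set ⋃_{m=t₀}^{t₁−1} E(m) is connected; S(m) ≠ ∅ for at least one m with t₀ ≤ m < t₁; the initial values are strictly sorted, v_1(t₀) < v_2(t₀) < ⋯ < v_n(t₀), and none of them equals μ; and there exist indices i with v_i(t₀) < μ and indices i with v_i(t₀) > μ. Let p₋ be the largest index with v_{p₋}(t₀) < μ and p₊ the smallest index with v_{p₊}(t₀) > μ. Then Σ_{m=t₀}^{t₁−1} [ Σ_{{k,l}∈E(m)} E[(v_k(m) − v_l(m))²] + Σ_{k∈S(m)} E[(v_k(m) − μ)²] ] ≥ (v_{p₋}(t₀) − μ)² + (v_{p₊}(t₀) − μ)² + Σ_{i∈{1,…,n−1}, i≠p₋} (v_i(t₀) − v_{i+1}(t₀))², where each unordered edge {k,l} of E(m) is counted once. -/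

import Mathlib

open Finset MeasureTheory ProbabilityTheory

/-- sum of squares is at most square of sum, for nonneg terms -/
lemma aux_sum_sq_le_sq_sum {α : Type*} (F : Finset α) (f : α → ℝ)
    (hf : ∀ i ∈ F, 0 ≤ f i) : ∑ i ∈ F, (f i)^2 ≤ (∑ i ∈ F, f i)^2 := by
  induction F using Finset.cons_induction with
  | empty => simp
  | cons a F ha ih =>
    rw [Finset.sum_cons, Finset.sum_cons]
    have h1 := ih (fun i hi => hf i (Finset.mem_cons_of_mem hi))
    have h2 : 0 ≤ f a := hf a (Finset.mem_cons_self _ _)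
    have h3 : 0 ≤ ∑ i ∈ F, f i :=
      Finset.sum_nonneg (fun i hi => hf i (Finset.mem_cons_of_mem hi))
    nlinarith

/-- chaining a consecutive-step strict monotonicity -/
lemma aux_mono_of_step {Z : ℕ → ℝ} {n : ℕ} (h : ∀ j, j + 1 ≤ n → Z j < Z (j+1)) :
    ∀ j k, j < k → k ≤ n → Z j < Z k := by
  intro j k hjk hkn
  induction k with
  | zero => omega
  | succ k ih =>
    rcases Nat.lt_or_ge j k with h' | h'
    · exact lt_trans (ih h' (by omega)) (h k hkn)
    · have : j = k := by omega
      subst this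
      exact h j hkn

/-- telescoping bound: gaps inside [p,q] have total length at most q - p -/
lemma aux_tele {Z : ℕ → ℝ} {n : ℕ} (hZ : ∀ j k, j < k → k ≤ n → Z j < Z k) :
    ∀ F : Finset ℕ, F ⊆ Finset.range n → ∀ p q : ℝ, p ≤ q →
      (∀ j ∈ F, p ≤ Z j ∧ Z (j+1) ≤ q) →
      ∑ j ∈ F, (Z (j+1) - Z j) ≤ q - p := by
  intro F
  induction F using Finset.strongInduction with
  | _ F ih =>
    intro hsub p q hpq hF
    rcases F.eq_empty_or_nonempty with rfl | hne
    · simp; linarith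
    · set j0 := F.max' hne with hj0def
      have hj0 : j0 ∈ F := F.max'_mem hne
      have hj0n : j0 < n := Finset.mem_range.mp (hsub hj0)
      have hZle : ∀ j k, j ≤ k → k ≤ n → Z j ≤ Z k := by
        intro j k hjk hkn
        rcases eq_or_lt_of_le hjk with rfl | h
        · exact le_refl _
        · exact (hZ j k h hkn).le
      have hrec := ih (F.erase j0) (Finset.erase_ssubset hj0)
        ((Finset.erase_subset _ _).trans hsub) p (Z j0) (le_trans (hF j0 hj0).1 (le_refl _))
        (by
          intro j hj
          have hjF := Finset.mem_of_mem_erase hj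
          have hjne := Finset.ne_of_mem_erase hj
          have hjle : j ≤ j0 := F.le_max' j hjF
          refine ⟨(hF j hjF).1, ?_⟩
          exact hZle (j+1) j0 (by omega) (by omega))
      have hsplit : ∑ j ∈ F.erase j0, (Z (j+1) - Z j) + (Z (j0+1) - Z j0) = ∑ j ∈ F, (Z (j+1) - Z j) :=
        Finset.sum_erase_add _ _ hj0
      have := (hF j0 hj0).2
      linarith

/-- combined: sum of squared gaps covered by [p,q] is at most (q-p)^2 -/
lemma aux_fiber_bound {Z : ℕ → ℝ} {n : ℕ} (hZ : ∀ j k, j < k → k ≤ n → Z j < Z k)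
    {p q : ℝ} (F : Finset ℕ) (hsub : F ⊆ Finset.range n)
    (hF : ∀ j ∈ F, p ≤ Z j ∧ Z (j+1) ≤ q) (hpq : p ≤ q) :
    ∑ j ∈ F, (Z (j+1) - Z j)^2 ≤ (q - p)^2 := by
  have h1 : ∑ j ∈ F, (Z (j+1) - Z j)^2 ≤ (∑ j ∈ F, (Z (j+1) - Z j))^2 := by
    apply aux_sum_sq_le_sq_sum
    intro j hj
    have hjn : j < n := Finset.mem_range.mp (hsub hj)
    have := hZ j (j+1) (by omega) (by omega)
    linarith
  have h2 : ∑ j ∈ F, (Z (j+1) - Z j) ≤ q - p := aux_tele hZ F hsub p q hpq hF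
  have h3 : 0 ≤ ∑ j ∈ F, (Z (j+1) - Z j) := by
    apply Finset.sum_nonneg
    intro j hj
    have hjn : j < n := Finset.mem_range.mp (hsub hj)
    have := hZ j (j+1) (by omega) (by omega)
    linarith
  nlinarith

/-- cut lemma: along a walk from inside P to outside P there is an edge leaving P -/
lemma aux_cut {V : Type*} {H : SimpleGraph V} (P : Set V) :
    ∀ {i j : V}, H.Walk i j → i ∈ P → j ∉ P → ∃ u w, H.Adj u w ∧ u ∈ P ∧ w ∉ P := by
  intro i j w
  induction w with
  | nil => intro h1 h2; exact absurd h1 h2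
  | @cons a b c hab p ih =>
    intro ha hc
    by_cases hb : b ∈ P
    · exact ih hb hc
    · exact ⟨a, b, hab, ha, hb⟩

section Step
variable {n : ℕ} (Gm : SimpleGraph (Fin n)) [DecidableRel Gm.Adj]

lemma aux_wsum_le_one (i : Fin n) :
    ∑ j ∈ Gm.neighborFinset i, (((max (Gm.degree i) (Gm.degree j) : ℕ) : ℝ))⁻¹ ≤ 1 := by
  by_cases h0 : Gm.degree i = 0
  · have : Gm.neighborFinset i = ∅ := Finset.card_eq_zero.mp h0
    simp [this]
  · have hpos : (0:ℝ) < ((Gm.degree i : ℕ) : ℝ) := by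
      have : 0 < Gm.degree i := Nat.pos_of_ne_zero h0
      exact_mod_cast this
    have hstep : ∀ j ∈ Gm.neighborFinset i,
        (((max (Gm.degree i) (Gm.degree j) : ℕ) : ℝ))⁻¹ ≤ ((Gm.degree i : ℕ) : ℝ)⁻¹ := by
      intro j _
      apply inv_anti₀ hpos
      exact_mod_cast Nat.le_max_left _ _
    calc ∑ j ∈ Gm.neighborFinset i, (((max (Gm.degree i) (Gm.degree j) : ℕ) : ℝ))⁻¹
        ≤ ∑ _j ∈ Gm.neighborFinset i, ((Gm.degree i : ℕ) : ℝ)⁻¹ := Finset.sum_le_sum hstep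
      _ = (Gm.degree i : ℝ) * ((Gm.degree i : ℕ) : ℝ)⁻¹ := by
          rw [Finset.sum_const, nsmul_eq_mul]
          norm_cast
      _ = 1 := mul_inv_cancel₀ (ne_of_gt hpos)

lemma aux_step_le (Sm : Finset (Fin n)) (μ Δt c : ℝ) (hΔ1 : 0 < Δt) (hΔ2 : Δt < 1)
    (y : Fin n → ℝ) (y' : ℝ) (i : Fin n)
    (hdyn : y' = y i + (Δt / 4) * (∑ j ∈ Gm.neighborFinset i,
        (((max (Gm.degree i) (Gm.degree j) : ℕ) : ℝ))⁻¹ * (y j - y i))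
        + (if i ∈ Sm then (Δt / 4) * (μ - y i) else 0))
    (hi : y i ≤ c) (hnb : ∀ j ∈ Gm.neighborFinset i, y j ≤ c) (hμ : i ∈ Sm → μ ≤ c) :
    y' ≤ c := by
  have hw0 : ∀ j : Fin n, (0:ℝ) ≤ (((max (Gm.degree i) (Gm.degree j) : ℕ) : ℝ))⁻¹ :=
    fun j => by positivity
  have hs1 : ∑ j ∈ Gm.neighborFinset i, (((max (Gm.degree i) (Gm.degree j) : ℕ) : ℝ))⁻¹ ≤ 1 :=
    aux_wsum_le_one Gm i
  have hs0 : (0:ℝ) ≤ ∑ j ∈ Gm.neighborFinset i, (((max (Gm.degree i) (Gm.degree j) : ℕ) : ℝ))⁻¹ :=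
    Finset.sum_nonneg fun j _ => hw0 j
  have hT : ∑ j ∈ Gm.neighborFinset i, (((max (Gm.degree i) (Gm.degree j) : ℕ) : ℝ))⁻¹ * (y j - y i)
      ≤ (∑ j ∈ Gm.neighborFinset i, (((max (Gm.degree i) (Gm.degree j) : ℕ) : ℝ))⁻¹) * (c - y i) := by
    rw [Finset.sum_mul]
    apply Finset.sum_le_sum
    intro j hj
    have := hnb j hj
    have := hw0 j
    nlinarith
  set T := ∑ j ∈ Gm.neighborFinset i, (((max (Gm.degree i) (Gm.degree j) : ℕ) : ℝ))⁻¹ * (y j - y i) with hTdef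
  set s := ∑ j ∈ Gm.neighborFinset i, (((max (Gm.degree i) (Gm.degree j) : ℕ) : ℝ))⁻¹ with hsdef
  have key : Δt/4 * T ≤ (1/4) * (c - y i) := by
    have h1 : Δt/4 * T ≤ Δt/4 * (s * (c - y i)) :=
      mul_le_mul_of_nonneg_left hT (by linarith)
    have h2 : s * (c - y i) ≤ c - y i := by nlinarith
    have h3 : Δt/4 * (s * (c - y i)) ≤ Δt/4 * (c - y i) :=
      mul_le_mul_of_nonneg_left h2 (by linarith)
    have h4 : Δt/4 * (c - y i) ≤ (1/4) * (c - y i) := by nlinarith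
    linarith
  by_cases hS : i ∈ Sm
  · rw [hdyn, if_pos hS]
    have hμc := hμ hS
    have h5 : Δt/4 * (μ - y i) ≤ (1/4) * (c - y i) := by nlinarith
    linarith
  · rw [hdyn, if_neg hS]
    linarith

lemma aux_step_ge (Sm : Finset (Fin n)) (μ Δt c : ℝ) (hΔ1 : 0 < Δt) (hΔ2 : Δt < 1)
    (y : Fin n → ℝ) (y' : ℝ) (i : Fin n)
    (hdyn : y' = y i + (Δt / 4) * (∑ j ∈ Gm.neighborFinset i,
        (((max (Gm.degree i) (Gm.degree j) : ℕ) : ℝ))⁻¹ * (y j - y i))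
        + (if i ∈ Sm then (Δt / 4) * (μ - y i) else 0))
    (hi : c ≤ y i) (hnb : ∀ j ∈ Gm.neighborFinset i, c ≤ y j) (hμ : i ∈ Sm → c ≤ μ) :
    c ≤ y' := by
  have hw0 : ∀ j : Fin n, (0:ℝ) ≤ (((max (Gm.degree i) (Gm.degree j) : ℕ) : ℝ))⁻¹ :=
    fun j => by positivity
  have hs1 : ∑ j ∈ Gm.neighborFinset i, (((max (Gm.degree i) (Gm.degree j) : ℕ) : ℝ))⁻¹ ≤ 1 :=
    aux_wsum_le_one Gm i
  have hs0 : (0:ℝ) ≤ ∑ j ∈ Gm.neighborFinset i, (((max (Gm.degree i) (Gm.degree j) : ℕ) : ℝ))⁻¹ :=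
    Finset.sum_nonneg fun j _ => hw0 j
  have hT : (∑ j ∈ Gm.neighborFinset i, (((max (Gm.degree i) (Gm.degree j) : ℕ) : ℝ))⁻¹) * (c - y i)
      ≤ ∑ j ∈ Gm.neighborFinset i, (((max (Gm.degree i) (Gm.degree j) : ℕ) : ℝ))⁻¹ * (y j - y i) := by
    rw [Finset.sum_mul]
    apply Finset.sum_le_sum
    intro j hj
    have := hnb j hj
    have := hw0 j
    nlinarith
  set T := ∑ j ∈ Gm.neighborFinset i, (((max (Gm.degree i) (Gm.degree j) : ℕ) : ℝ))⁻¹ * (y j - y i) with hTdef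
  set s := ∑ j ∈ Gm.neighborFinset i, (((max (Gm.degree i) (Gm.degree j) : ℕ) : ℝ))⁻¹ with hsdef
  have key : (1/4) * (c - y i) ≤ Δt/4 * T := by
    have h1 : Δt/4 * (s * (c - y i)) ≤ Δt/4 * T :=
      mul_le_mul_of_nonneg_left hT (by linarith)
    have h2 : c - y i ≤ s * (c - y i) := by nlinarith
    have h3 : Δt/4 * (c - y i) ≤ Δt/4 * (s * (c - y i)) :=
      mul_le_mul_of_nonneg_left h2 (by linarith)
    have h4 : (1/4) * (c - y i) ≤ Δt/4 * (c - y i) := by nlinarith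
    linarith
  by_cases hS : i ∈ Sm
  · rw [hdyn, if_pos hS]
    have hμc := hμ hS
    have h5 : (1/4) * (c - y i) ≤ Δt/4 * (μ - y i) := by nlinarith
    linarith
  · rw [hdyn, if_neg hS]
    linarith

end Step

lemma aux_crossing_exists {n : ℕ}
    (G : ℕ → SimpleGraph (Fin n)) [∀ t, DecidableRel (G t).Adj]
    (S : ℕ → Finset (Fin n)) (μ : ℝ) (t₀ t₁ : ℕ)
    (x : ℕ → Fin n → ℝ)
    (Δ : ℕ → ℝ) (hΔ : ∀ m, t₀ ≤ m → m < t₁ → 0 < Δ m ∧ Δ m < 1)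
    (hDyn : ∀ t, t₀ ≤ t → ∀ i,
      x (t + 1) i = x t i
        + (Δ t / 4) * (∑ j ∈ (G t).neighborFinset i,
            (((max ((G t).degree i) ((G t).degree j) : ℕ) : ℝ))⁻¹ * (x t j - x t i))
        + (if i ∈ S t then (Δ t / 4) * (μ - x t i) else 0))
    (hConn : (⨆ m ∈ Finset.Ico t₀ t₁, G m).Connected)
    (a b : ℝ) (hab : a < b)
    (hsplit : ∀ i, x t₀ i ≤ a ∨ b ≤ x t₀ i) (hμab : μ ≤ a ∨ b ≤ μ)
    (hlo : ∃ i, x t₀ i ≤ a) (hhi : ∃ i, b ≤ x t₀ i) :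
    ∃ m, t₀ ≤ m ∧ m < t₁ ∧
      ((∃ k l, (G m).Adj k l ∧ x m k ≤ a ∧ b ≤ x m l) ∨
       (∃ k ∈ S m, (x m k ≤ a ∧ b ≤ μ) ∨ (μ ≤ a ∧ b ≤ x m k))) := by
  by_contra hno
  have hno' : ∀ m, t₀ ≤ m → m < t₁ →
      ¬ ((∃ k l, (G m).Adj k l ∧ x m k ≤ a ∧ b ≤ x m l) ∨
         (∃ k ∈ S m, (x m k ≤ a ∧ b ≤ μ) ∨ (μ ≤ a ∧ b ≤ x m k))) :=
    fun m h1 h2 hc => hno ⟨m, h1, h2, hc⟩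
  have hinv : ∀ m, t₀ ≤ m → m ≤ t₁ → ∀ i : Fin n,
      (x t₀ i ≤ a → x m i ≤ a) ∧ (b ≤ x t₀ i → b ≤ x m i) := by
    intro m hm
    induction m, hm using Nat.le_induction with
    | base => intro _ i; exact ⟨id, id⟩
    | succ m hm ih =>
      intro hm1 i
      have hmlt : m < t₁ := by omega
      have ihm := ih (by omega)
      obtain ⟨hΔ1, hΔ2⟩ := hΔ m hm hmlt
      constructor
      · intro hia
        have hxi : x m i ≤ a := (ihm i).1 hia
        refine aux_step_le (G m) (S m) μ (Δ m) a hΔ1 hΔ2 (x m) _ i (hDyn m hm i) hxi ?_ ?_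
        · intro j hj
          rcases hsplit j with hja | hjb
          · exact (ihm j).1 hja
          · exact absurd (Or.inl ⟨i, j, (SimpleGraph.mem_neighborFinset _ _ _).mp hj, hxi,
              (ihm j).2 hjb⟩) (hno' m hm hmlt)
        · intro hiS
          rcases hμab with h | h
          · exact h
          · exact absurd (Or.inr ⟨i, hiS, Or.inl ⟨hxi, h⟩⟩) (hno' m hm hmlt)
      · intro hib
        have hxi : b ≤ x m i := (ihm i).2 hib
        refine aux_step_ge (G m) (S m) μ (Δ m) b hΔ1 hΔ2 (x m) _ i (hDyn m hm i) hxi ?_ ?_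
        · intro j hj
          rcases hsplit j with hja | hjb
          · exact absurd (Or.inl ⟨j, i, ((SimpleGraph.mem_neighborFinset _ _ _).mp hj).symm,
              (ihm j).1 hja, hxi⟩) (hno' m hm hmlt)
          · exact (ihm j).2 hjb
        · intro hiS
          rcases hμab with h | h
          · exact absurd (Or.inr ⟨i, hiS, Or.inr ⟨h, hxi⟩⟩) (hno' m hm hmlt)
          · exact h
  obtain ⟨i0, hi0⟩ := hlo
  obtain ⟨j0, hj0⟩ := hhi
  have hj0P : j0 ∉ {i : Fin n | x t₀ i ≤ a} := by
    simp only [Set.mem_setOf_eq, not_le]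
    linarith
  obtain ⟨p⟩ := hConn.preconnected i0 j0
  obtain ⟨u, w, huw, hu, hw⟩ := aux_cut {i : Fin n | x t₀ i ≤ a} p hi0 hj0P
  have : ∃ m, (t₀ ≤ m ∧ m < t₁) ∧ (G m).Adj u w := by
    have h2 := huw
    simp only [SimpleGraph.iSup_adj, Finset.mem_Ico] at h2
    obtain ⟨m, hm⟩ := h2
    exact ⟨m, by simpa using hm⟩
  obtain ⟨m, ⟨hm1, hm2⟩, hadj⟩ := this
  have hbw : b ≤ x t₀ w := (hsplit w).resolve_left hw
  exact hno' m hm1 hm2 (Or.inl ⟨u, w, hadj, (hinv m hm1 hm2.le u).1 hu, (hinv m hm1 hm2.le w).2 hbw⟩)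

def evtVal {n : ℕ} (x : ℕ → Fin n → ℝ) (μ : ℝ) : ℕ × ((Fin n × Fin n) ⊕ Fin n) → ℝ
  | (m, .inl p) => (x m p.1 - x m p.2)^2
  | (m, .inr k) => (x m k - μ)^2

def evtCovers {n : ℕ} (x : ℕ → Fin n → ℝ) (μ : ℝ) (Z : ℕ → ℝ) :
    ℕ × ((Fin n × Fin n) ⊕ Fin n) → ℕ → Prop
  | (m, .inl p), j => x m p.1 ≤ Z j ∧ Z (j+1) ≤ x m p.2
  | (m, .inr k), j => (x m k ≤ Z j ∧ Z (j+1) ≤ μ) ∨ (μ ≤ Z j ∧ Z (j+1) ≤ x m k)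

def evtValid {n : ℕ} (G : ℕ → SimpleGraph (Fin n)) [∀ t, DecidableRel (G t).Adj]
    (S : ℕ → Finset (Fin n)) (x : ℕ → Fin n → ℝ) (t₀ t₁ : ℕ) :
    ℕ × ((Fin n × Fin n) ⊕ Fin n) → Prop
  | (m, .inl p) => t₀ ≤ m ∧ m < t₁ ∧ (G m).Adj p.1 p.2 ∧ x m p.1 < x m p.2
  | (m, .inr k) => t₀ ≤ m ∧ m < t₁ ∧ k ∈ S m

lemma evtVal_nonneg {n : ℕ} (x : ℕ → Fin n → ℝ) (μ : ℝ) (e : ℕ × ((Fin n × Fin n) ⊕ Fin n)) :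
    0 ≤ evtVal x μ e := by
  obtain ⟨m, p | k⟩ := e <;> simp [evtVal] <;> positivity

/-- halving lemma -/
lemma aux_half {n : ℕ} (Gm : SimpleGraph (Fin n)) [DecidableRel Gm.Adj] (y : Fin n → ℝ) :
    ∑ p ∈ Finset.univ.filter (fun p : Fin n × Fin n => Gm.Adj p.1 p.2 ∧ y p.1 < y p.2),
        (y p.1 - y p.2)^2
      ≤ (1/2) * ∑ k, ∑ l, (if Gm.Adj k l then (y k - y l)^2 else 0) := by
  classical
  have hfull : ∑ k, ∑ l, (if Gm.Adj k l then (y k - y l)^2 else 0)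
      = ∑ p : Fin n × Fin n, (if Gm.Adj p.1 p.2 then (y p.1 - y p.2)^2 else 0) := by
    rw [← Finset.sum_product']
    rfl
  set g : Fin n × Fin n → ℝ := fun p => if Gm.Adj p.1 p.2 then (y p.1 - y p.2)^2 else 0 with hg
  have hg0 : ∀ p, 0 ≤ g p := by
    intro p; simp only [hg]; split <;> positivity
  set slt := Finset.univ.filter (fun p : Fin n × Fin n => Gm.Adj p.1 p.2 ∧ y p.1 < y p.2) with hslt
  set sgt := Finset.univ.filter (fun p : Fin n × Fin n => Gm.Adj p.1 p.2 ∧ y p.2 < y p.1) with hsgt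
  have hdisj : Disjoint slt sgt := by
    rw [Finset.disjoint_filter]
    rintro p _ ⟨_, h1⟩ ⟨_, h2⟩
    exact absurd h2 (not_lt.mpr h1.le)
  have hswap : ∑ p ∈ sgt, g p = ∑ p ∈ slt, g p := by
    apply Finset.sum_nbij' (fun p => Prod.swap p) (fun p => Prod.swap p)
    · intro p hp
      simp only [hsgt, Finset.mem_filter, Finset.mem_univ, true_and] at hp
      simp only [hslt, Finset.mem_filter, Finset.mem_univ, true_and]
      exact ⟨hp.1.symm, hp.2⟩
    · intro p hp
      simp only [hslt, Finset.mem_filter, Finset.mem_univ, true_and] at hp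
      simp only [hsgt, Finset.mem_filter, Finset.mem_univ, true_and]
      exact ⟨hp.1.symm, hp.2⟩
    · intro p _; simp
    · intro p _; simp
    · intro p hp
      simp only [hsgt, Finset.mem_filter, Finset.mem_univ, true_and] at hp
      simp only [hg, Prod.fst_swap, Prod.snd_swap, hp.1, hp.1.symm, if_true]
      ring
  have hsub : slt ∪ sgt ⊆ Finset.univ := Finset.subset_univ _
  have hbig : ∑ p ∈ slt, g p + ∑ p ∈ sgt, g p ≤ ∑ p : Fin n × Fin n, g p := by
    rw [← Finset.sum_union hdisj]
    exact Finset.sum_le_sum_of_subset_of_nonneg hsub (fun p _ _ => hg0 p)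
  have hon : ∑ p ∈ slt, (y p.1 - y p.2)^2 = ∑ p ∈ slt, g p := by
    apply Finset.sum_congr rfl
    intro p hp
    simp only [hslt, Finset.mem_filter, Finset.mem_univ, true_and] at hp
    simp [hg, hp.1]
  rw [hon, hfull]
  linarith [hswap, hbig]

lemma aux_det_main {n : ℕ} (hn : 0 < n)
    (G : ℕ → SimpleGraph (Fin n)) [∀ t, DecidableRel (G t).Adj]
    (S : ℕ → Finset (Fin n)) (μ : ℝ) (t₀ t₁ : ℕ)
    (x : ℕ → Fin n → ℝ)
    (Δ : ℕ → ℝ) (hΔ : ∀ m, t₀ ≤ m → m < t₁ → 0 < Δ m ∧ Δ m < 1)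
    (hDyn : ∀ t, t₀ ≤ t → ∀ i,
      x (t + 1) i = x t i
        + (Δ t / 4) * (∑ j ∈ (G t).neighborFinset i,
            (((max ((G t).degree i) ((G t).degree j) : ℕ) : ℝ))⁻¹ * (x t j - x t i))
        + (if i ∈ S t then (Δ t / 4) * (μ - x t i) else 0))
    (hConn : (⨆ m ∈ Finset.Ico t₀ t₁, G m).Connected)
    (Z : ℕ → ℝ) (hZ : ∀ j k, j < k → k ≤ n → Z j < Z k)
    (hlev : ∀ i : Fin n, ∃ e, e ≤ n ∧ Z e = x t₀ i)
    (hμlev : ∃ e, e ≤ n ∧ Z e = μ)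
    (hlo : ∀ j, j < n → ∃ i : Fin n, x t₀ i ≤ Z j)
    (hhi : ∀ j, j < n → ∃ i : Fin n, Z (j+1) ≤ x t₀ i) :
    ∑ j ∈ Finset.range n, (Z (j+1) - Z j)^2
      ≤ ∑ m ∈ Finset.Ico t₀ t₁,
          ((1/2) * ∑ k, ∑ l, (if (G m).Adj k l then (x m k - x m l)^2 else 0)
            + ∑ k ∈ S m, (x m k - μ)^2) := by
  classical
  have hZle : ∀ j k, j ≤ k → k ≤ n → Z j ≤ Z k := by
    intro j k hjk hkn
    rcases eq_or_lt_of_le hjk with rfl | h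
    · exact le_refl _
    · exact (hZ j k h hkn).le
  -- choice of a crossing event per gap
  have hch : ∀ j : ℕ, ∃ e, j < n → evtValid G S x t₀ t₁ e ∧ evtCovers x μ Z e j := by
    intro j
    by_cases hj : j < n
    · have hjj : Z j < Z (j+1) := hZ j (j+1) (by omega) (by omega)
      obtain ⟨m, hm1, hm2, hc⟩ := aux_crossing_exists G S μ t₀ t₁ x Δ hΔ hDyn hConn
        (Z j) (Z (j+1)) hjj
        (by
          intro i
          obtain ⟨e, he, hZe⟩ := hlev i
          rcases le_or_gt e j with h | h
          · exact Or.inl (hZe ▸ hZle e j h (by omega))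
          · exact Or.inr (hZe ▸ hZle (j+1) e h (by omega)))
        (by
          obtain ⟨e, he, hZe⟩ := hμlev
          rcases le_or_gt e j with h | h
          · exact Or.inl (hZe ▸ hZle e j h (by omega))
          · exact Or.inr (hZe ▸ hZle (j+1) e h (by omega)))
        (hlo j hj) (hhi j hj)
      rcases hc with ⟨k, l, hadj, h1, h2⟩ | ⟨k, hkS, hor⟩
      · exact ⟨(m, .inl (k, l)), fun _ =>
          ⟨⟨hm1, hm2, hadj, lt_of_le_of_lt h1 (lt_of_lt_of_le hjj h2)⟩, ⟨h1, h2⟩⟩⟩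
      · exact ⟨(m, .inr k), fun _ => ⟨⟨hm1, hm2, hkS⟩, hor⟩⟩
    · exact ⟨(t₀, .inr ⟨0, hn⟩), fun h => absurd h hj⟩
  choose c hc using hch
  set I := (Finset.range n).image c with hI
  have hmaps : ∀ j ∈ Finset.range n, c j ∈ I := fun j hj => Finset.mem_image_of_mem c hj
  rw [← Finset.sum_fiberwise_of_maps_to hmaps (fun j => (Z (j+1) - Z j)^2)]
  -- fiber bound
  have fibub : ∀ e ∈ I, ∑ j ∈ (Finset.range n).filter (fun j => c j = e), (Z (j+1) - Z j)^2
      ≤ evtVal x μ e := by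
    intro e he
    obtain ⟨j₀, hj₀, hcj₀⟩ := Finset.mem_image.mp he
    have hj₀n := Finset.mem_range.mp hj₀
    have hj₀f : j₀ ∈ (Finset.range n).filter (fun j => c j = e) :=
      Finset.mem_filter.mpr ⟨hj₀, hcj₀⟩
    have hcov : ∀ j ∈ (Finset.range n).filter (fun j => c j = e), evtCovers x μ Z e j := by
      intro j hj
      obtain ⟨hjr, hje⟩ := Finset.mem_filter.mp hj
      rw [← hje]
      exact (hc j (Finset.mem_range.mp hjr)).2
    have hsubF : (Finset.range n).filter (fun j => c j = e) ⊆ Finset.range n :=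
      Finset.filter_subset _ _
    obtain ⟨m, ⟨k, l⟩ | k⟩ := e
    · -- edge event
      have hcov' : ∀ j ∈ (Finset.range n).filter (fun j => c j = (m, Sum.inl (k, l))),
          x m k ≤ Z j ∧ Z (j+1) ≤ x m l := fun j hj => hcov j hj
      have hcov0 := hcov' j₀ hj₀f
      have hpq : x m k ≤ x m l :=
        le_trans hcov0.1 (le_trans (hZ j₀ (j₀+1) (by omega) (by omega)).le hcov0.2)
      have := aux_fiber_bound hZ _ hsubF hcov' hpq
      calc ∑ j ∈ (Finset.range n).filter (fun j => c j = (m, Sum.inl (k, l))),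
            (Z (j+1) - Z j)^2 ≤ (x m l - x m k)^2 := this
        _ = evtVal x μ (m, Sum.inl (k, l)) := by simp only [evtVal]; ring
    · -- measurement event
      by_cases hxm : x m k ≤ μ
      · have hcov' : ∀ j ∈ (Finset.range n).filter (fun j => c j = (m, Sum.inr k)),
            x m k ≤ Z j ∧ Z (j+1) ≤ μ := by
          intro j hj
          have hjn := Finset.mem_range.mp (Finset.mem_filter.mp hj).1
          rcases hcov j hj with h | h
          · exact h
          · exfalso
            have := hZ j (j+1) (by omega) (by omega)
            have h1 := h.1
            have h2 := h.2
            linarith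
        have := aux_fiber_bound hZ _ hsubF hcov' hxm
        calc ∑ j ∈ (Finset.range n).filter (fun j => c j = (m, Sum.inr k)),
              (Z (j+1) - Z j)^2 ≤ (μ - x m k)^2 := this
          _ = evtVal x μ (m, Sum.inr k) := by simp only [evtVal]; ring
      · have hxm' : μ ≤ x m k := (not_le.mp hxm).le
        have hcov' : ∀ j ∈ (Finset.range n).filter (fun j => c j = (m, Sum.inr k)),
            μ ≤ Z j ∧ Z (j+1) ≤ x m k := by
          intro j hj
          have hjn := Finset.mem_range.mp (Finset.mem_filter.mp hj).1
          rcases hcov j hj with h | h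
          · exfalso
            have := hZ j (j+1) (by omega) (by omega)
            have h1 := h.1
            have h2 := h.2
            linarith
          · exact h
        have := aux_fiber_bound hZ _ hsubF hcov' hxm'
        calc ∑ j ∈ (Finset.range n).filter (fun j => c j = (m, Sum.inr k)),
              (Z (j+1) - Z j)^2 ≤ (x m k - μ)^2 := this
          _ = evtVal x μ (m, Sum.inr k) := by simp only [evtVal]
  have step1 : ∑ e ∈ I, ∑ j ∈ (Finset.range n).filter (fun j => c j = e), (Z (j+1) - Z j)^2
      ≤ ∑ e ∈ I, evtVal x μ e := Finset.sum_le_sum fibub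
  -- validity of events in I
  have hval : ∀ e ∈ I, evtValid G S x t₀ t₁ e := by
    intro e he
    obtain ⟨j₀, hj₀, hcj₀⟩ := Finset.mem_image.mp he
    rw [← hcj₀]
    exact (hc j₀ (Finset.mem_range.mp hj₀)).1
  -- regroup by time
  have hmaps2 : ∀ e ∈ I, e.1 ∈ Finset.Ico t₀ t₁ := by
    intro e he
    have := hval e he
    obtain ⟨m, pk | k⟩ := e
    · exact Finset.mem_Ico.mpr ⟨this.1, this.2.1⟩
    · exact Finset.mem_Ico.mpr ⟨this.1, this.2.1⟩
  have step2 : ∑ e ∈ I, evtVal x μ e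
      = ∑ m ∈ Finset.Ico t₀ t₁, ∑ e ∈ I.filter (fun e => e.1 = m), evtVal x μ e :=
    (Finset.sum_fiberwise_of_maps_to hmaps2 (evtVal x μ)).symm
  -- per-time bound
  have step3 : ∀ m ∈ Finset.Ico t₀ t₁,
      ∑ e ∈ I.filter (fun e => e.1 = m), evtVal x μ e
        ≤ (1/2) * ∑ k, ∑ l, (if (G m).Adj k l then (x m k - x m l)^2 else 0)
            + ∑ k ∈ S m, (x m k - μ)^2 := by
    intro m _
    set A := (Finset.univ.filter (fun p : Fin n × Fin n => (G m).Adj p.1 p.2 ∧ x m p.1 < x m p.2)).image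
      (fun p => ((m, Sum.inl p) : ℕ × ((Fin n × Fin n) ⊕ Fin n))) with hA
    set B := (S m).image (fun k => ((m, Sum.inr k) : ℕ × ((Fin n × Fin n) ⊕ Fin n))) with hB
    have hsubm : I.filter (fun e => e.1 = m) ⊆ A ∪ B := by
      intro e he
      obtain ⟨heI, hem⟩ := Finset.mem_filter.mp he
      have hv := hval e heI
      obtain ⟨m', pk | k⟩ := e
      · simp only at hem
        subst hem
        refine Finset.mem_union_left _ (Finset.mem_image.mpr ⟨pk, ?_, rfl⟩)
        exact Finset.mem_filter.mpr ⟨Finset.mem_univ _, hv.2.2⟩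
      · simp only at hem
        subst hem
        exact Finset.mem_union_right _ (Finset.mem_image.mpr ⟨k, hv.2.2, rfl⟩)
    have hdisjAB : Disjoint A B := by
      simp only [Finset.disjoint_left, hA, hB, Finset.mem_image]
      rintro e ⟨p, _, rfl⟩ ⟨k, _, hk⟩
      simp at hk
    have hle1 : ∑ e ∈ I.filter (fun e => e.1 = m), evtVal x μ e ≤ ∑ e ∈ A ∪ B, evtVal x μ e :=
      Finset.sum_le_sum_of_subset_of_nonneg hsubm (fun e _ _ => evtVal_nonneg x μ e)
    have hsumA : ∑ e ∈ A, evtVal x μ e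
        = ∑ p ∈ Finset.univ.filter (fun p : Fin n × Fin n => (G m).Adj p.1 p.2 ∧ x m p.1 < x m p.2),
            (x m p.1 - x m p.2)^2 := by
      rw [hA, Finset.sum_image]
      · rfl
      · intro p _ q _ h
        simpa using h
    have hsumB : ∑ e ∈ B, evtVal x μ e = ∑ k ∈ S m, (x m k - μ)^2 := by
      rw [hB, Finset.sum_image]
      · rfl
      · intro p _ q _ h
        simpa using h
    rw [Finset.sum_union hdisjAB] at hle1
    rw [hsumA, hsumB] at hle1
    have := aux_half (G m) (x m)
    linarith
  calc ∑ e ∈ I, ∑ j ∈ (Finset.range n).filter (fun j => c j = e), (Z (j+1) - Z j)^2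
      ≤ ∑ e ∈ I, evtVal x μ e := step1
    _ = ∑ m ∈ Finset.Ico t₀ t₁, ∑ e ∈ I.filter (fun e => e.1 = m), evtVal x μ e := step2
    _ ≤ ∑ m ∈ Finset.Ico t₀ t₁,
          ((1/2) * ∑ k, ∑ l, (if (G m).Adj k l then (x m k - x m l)^2 else 0)
            + ∑ k ∈ S m, (x m k - μ)^2) := Finset.sum_le_sum step3

def augZ {n : ℕ} (v0 : Fin n → ℝ) (μ : ℝ) (pm : Fin n) : ℕ → ℝ := fun j =>
  if h : j ≤ (pm : ℕ) then v0 ⟨j, lt_of_le_of_lt h pm.isLt⟩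
  else if j = (pm : ℕ) + 1 then μ
  else if h2 : j - 1 < n then v0 ⟨j - 1, h2⟩ else 0

lemma augZ_low {n : ℕ} (v0 : Fin n → ℝ) (μ : ℝ) (pm : Fin n) {j : ℕ} (h : j ≤ (pm : ℕ)) :
    augZ v0 μ pm j = v0 ⟨j, lt_of_le_of_lt h pm.isLt⟩ := by
  simp [augZ, h]

lemma augZ_mid {n : ℕ} (v0 : Fin n → ℝ) (μ : ℝ) (pm : Fin n) :
    augZ v0 μ pm ((pm : ℕ) + 1) = μ := by
  unfold augZ
  rw [dif_neg (by omega), if_pos rfl]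

lemma augZ_high {n : ℕ} (v0 : Fin n → ℝ) (μ : ℝ) (pm : Fin n) {j : ℕ}
    (h1 : (pm : ℕ) + 1 < j) (h2 : j - 1 < n) :
    augZ v0 μ pm j = v0 ⟨j - 1, h2⟩ := by
  unfold augZ
  rw [dif_neg (by omega), if_neg (by omega), dif_pos h2]

lemma fin_add_one_val {n : ℕ} [NeZero n] (i : Fin n) (h : (i : ℕ) + 1 < n) :
    ((i + 1 : Fin n) : ℕ) = (i : ℕ) + 1 := by
  have h1 : ((1 : Fin n) : ℕ) = 1 % n := Fin.val_one' n
  have := i.isLt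
  have h2 : 1 % n = 1 := Nat.mod_eq_of_lt (by omega)
  rw [Fin.val_add, h1, h2]
  exact Nat.mod_eq_of_lt h

lemma aux_augZ_step {n : ℕ} (v0 : Fin n → ℝ) (μ : ℝ) (hSorted : StrictMono v0)
    (pm pp : Fin n) (hpmμ : v0 pm < μ) (hppμ : μ < v0 pp)
    (hppm : (pp : ℕ) = (pm : ℕ) + 1) :
    ∀ j, j + 1 ≤ n → augZ v0 μ pm j < augZ v0 μ pm (j + 1) := by
  intro j hj
  have hpmn := pm.isLt
  have hppn := pp.isLt
  rcases lt_trichotomy j (pm : ℕ) with h | h | h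
  · rw [augZ_low v0 μ pm (by omega : j ≤ (pm:ℕ)), augZ_low v0 μ pm (by omega : j+1 ≤ (pm:ℕ))]
    exact hSorted (by simp [Fin.lt_def])
  · rw [h, augZ_low v0 μ pm (le_refl _), augZ_mid]
    exact hpmμ
  · rcases eq_or_lt_of_le (by omega : (pm:ℕ) + 1 ≤ j) with h2 | h2
    · rw [← h2, augZ_mid, augZ_high v0 μ pm (by omega) (by omega)]
      have heq : (⟨(pm:ℕ)+1+1-1, by omega⟩ : Fin n) = pp := by
        apply Fin.ext
        simp [hppm]
      rw [heq]
      exact hppμ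
    · rw [augZ_high v0 μ pm h2 (by omega), augZ_high v0 μ pm (by omega) (by omega)]
      exact hSorted (by simp [Fin.lt_def]; omega)

lemma aux_augZ_lev {n : ℕ} [NeZero n] (v0 : Fin n → ℝ) (μ : ℝ) (pm : Fin n) :
    ∀ i : Fin n, ∃ e, e ≤ n ∧ augZ v0 μ pm e = v0 i := by
  intro i
  rcases le_or_gt (i : ℕ) (pm : ℕ) with h | h
  · refine ⟨(i : ℕ), by omega, ?_⟩
    rw [augZ_low v0 μ pm h]
  · refine ⟨(i : ℕ) + 1, by have := i.isLt; omega, ?_⟩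
    rw [augZ_high v0 μ pm (by omega) (by have := i.isLt; omega)]
    exact congrArg v0 (Fin.ext (by simp))

lemma aux_augZ_μlev {n : ℕ} (v0 : Fin n → ℝ) (μ : ℝ) (pm : Fin n) (hP1n : (pm : ℕ) + 1 < n) :
    ∃ e, e ≤ n ∧ augZ v0 μ pm e = μ :=
  ⟨(pm : ℕ) + 1, by omega, augZ_mid v0 μ pm⟩

lemma aux_augZ_lo {n : ℕ} (v0 : Fin n → ℝ) (μ : ℝ) (pm : Fin n) (hpmμ : v0 pm < μ) :
    ∀ j, j < n → ∃ i : Fin n, v0 i ≤ augZ v0 μ pm j := by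
  intro j hj
  rcases le_or_gt j (pm : ℕ) with h | h
  · exact ⟨⟨j, hj⟩, le_of_eq (augZ_low v0 μ pm h).symm⟩
  · rcases eq_or_lt_of_le (by omega : (pm : ℕ) + 1 ≤ j) with h2 | h2
    · refine ⟨pm, ?_⟩
      rw [← h2, augZ_mid]
      exact hpmμ.le
    · exact ⟨⟨j - 1, by omega⟩, le_of_eq (augZ_high v0 μ pm h2 (by omega)).symm⟩

lemma aux_augZ_hi {n : ℕ} (v0 : Fin n → ℝ) (μ : ℝ) (pm pp : Fin n) (hppμ : μ < v0 pp)
    (hppm : (pp : ℕ) = (pm : ℕ) + 1) :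
    ∀ j, j < n → ∃ i : Fin n, augZ v0 μ pm (j + 1) ≤ v0 i := by
  intro j hj
  rcases le_or_gt (j + 1) (pm : ℕ) with h | h
  · exact ⟨⟨j + 1, by have := pm.isLt; omega⟩, le_of_eq (augZ_low v0 μ pm h)⟩
  · rcases eq_or_lt_of_le (by omega : (pm : ℕ) + 1 ≤ j + 1) with h2 | h2
    · refine ⟨pp, ?_⟩
      rw [← h2, augZ_mid]
      exact hppμ.le
    · exact ⟨⟨j, hj⟩, le_of_eq (by rw [augZ_high v0 μ pm h2 (by omega)]; norm_num)⟩

lemma aux_lhs_eq {n : ℕ} [NeZero n] (v0 : Fin n → ℝ) (μ : ℝ)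
    (pm pp : Fin n) (hppm : (pp : ℕ) = (pm : ℕ) + 1) :
    (v0 pm - μ)^2 + (v0 pp - μ)^2
      + ∑ i ∈ Finset.univ.filter (fun i : Fin n => (i : ℕ) + 1 < n ∧ i ≠ pm),
          (v0 i - v0 (i + 1))^2
    = ∑ j ∈ Finset.range n, (augZ v0 μ pm (j + 1) - augZ v0 μ pm j)^2 := by
  classical
  have hpmn := pm.isLt
  have hppn := pp.isLt
  have hP1n : (pm : ℕ) + 1 < n := by omega
  set P := (pm : ℕ) with hPdef
  set f : ℕ → ℝ := fun j => (augZ v0 μ pm (j + 1) - augZ v0 μ pm j)^2 with hf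
  have hsub : ({P, P + 1} : Finset ℕ) ⊆ Finset.range n := by
    intro j hj
    simp only [Finset.mem_insert, Finset.mem_singleton] at hj
    rcases hj with rfl | rfl <;> simp [Finset.mem_range] <;> omega
  have hsplit : ∑ j ∈ Finset.range n, f j
      = ∑ j ∈ Finset.range n \ {P, P + 1}, f j + ∑ j ∈ ({P, P + 1} : Finset ℕ), f j :=
    (Finset.sum_sdiff hsub).symm
  have hpair : ∑ j ∈ ({P, P + 1} : Finset ℕ), f j = f P + f (P + 1) :=
    Finset.sum_pair (by omega)
  have hfP : f P = (v0 pm - μ)^2 := by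
    simp only [hf]
    rw [augZ_mid, augZ_low v0 μ pm (le_refl _)]
    have : v0 ⟨P, lt_of_le_of_lt (le_refl _) pm.isLt⟩ = v0 pm := rfl
    rw [this]
    ring
  have hfP1 : f (P + 1) = (v0 pp - μ)^2 := by
    simp only [hf]
    rw [augZ_mid, augZ_high v0 μ pm (by omega) (by omega)]
    have : (⟨P + 1 + 1 - 1, by omega⟩ : Fin n) = pp := by
      apply Fin.ext
      simp [hppm]
    rw [this]
  have hbij : ∑ i ∈ Finset.univ.filter (fun i : Fin n => (i : ℕ) + 1 < n ∧ i ≠ pm),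
      (v0 i - v0 (i + 1))^2 = ∑ j ∈ Finset.range n \ {P, P + 1}, f j := by
    apply Finset.sum_nbij' (i := fun i : Fin n => if (i : ℕ) < P then (i : ℕ) else (i : ℕ) + 1)
      (j := fun j : ℕ => if h : j < P then (⟨j, by omega⟩ : Fin n)
        else if h2 : j - 1 < n then ⟨j - 1, h2⟩ else pm)
    · intro a ha
      simp only [Finset.mem_filter, Finset.mem_univ, true_and] at ha
      have hane : (a : ℕ) ≠ P := fun hh => ha.2 (Fin.ext hh)
      have ha1 := ha.1
      simp only [Finset.mem_sdiff, Finset.mem_range, Finset.mem_insert, Finset.mem_singleton,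
        not_or]
      split_ifs with h
      · exact ⟨by omega, by omega, by omega⟩
      · exact ⟨by omega, by omega, by omega⟩
    · intro j hj
      simp only [Finset.mem_sdiff, Finset.mem_range, Finset.mem_insert, Finset.mem_singleton,
        not_or] at hj
      obtain ⟨hjn, hj1, hj2⟩ := hj
      simp only [Finset.mem_filter, Finset.mem_univ, true_and]
      by_cases h : j < P
      · rw [dif_pos h]
        refine ⟨by show j + 1 < n; omega, fun hh => ?_⟩
        have := congrArg Fin.val hh
        simp only [] at this
        omega
      · rw [dif_neg h, dif_pos (by omega : j - 1 < n)]
        refine ⟨by show j - 1 + 1 < n; omega, fun hh => ?_⟩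
        have := congrArg Fin.val hh
        simp only [] at this
        omega
    · intro a ha
      simp only [Finset.mem_filter, Finset.mem_univ, true_and] at ha
      have hane : (a : ℕ) ≠ P := fun hh => ha.2 (Fin.ext hh)
      by_cases h : (a : ℕ) < P
      · rw [if_pos h, dif_pos h]
      · rw [if_neg h, dif_neg (by omega : ¬ ((a : ℕ) + 1 < P)),
          dif_pos (by omega : (a : ℕ) + 1 - 1 < n)]
        exact Fin.ext (by simp)
    · intro j hj
      simp only [Finset.mem_sdiff, Finset.mem_range, Finset.mem_insert, Finset.mem_singleton,
        not_or] at hj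
      obtain ⟨hjn, hj1, hj2⟩ := hj
      by_cases h : j < P
      · rw [dif_pos h]
        show (if j < P then j else j + 1) = j
        rw [if_pos h]
      · rw [dif_neg h, dif_pos (by omega : j - 1 < n)]
        show (if j - 1 < P then j - 1 else j - 1 + 1) = j
        rw [if_neg (by omega : ¬ (j - 1 < P))]
        omega
    · intro a ha
      simp only [Finset.mem_filter, Finset.mem_univ, true_and] at ha
      have hane : (a : ℕ) ≠ P := fun hh => ha.2 (Fin.ext hh)
      have hval : ((a + 1 : Fin n) : ℕ) = (a : ℕ) + 1 := fin_add_one_val a ha.1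
      by_cases h : (a : ℕ) < P
      · rw [if_pos h]
        simp only [hf]
        rw [augZ_low v0 μ pm (by omega : (a : ℕ) + 1 ≤ P), augZ_low v0 μ pm (by omega : (a : ℕ) ≤ P)]
        have e1 : v0 ⟨(a : ℕ), lt_of_le_of_lt (by omega) pm.isLt⟩ = v0 a := rfl
        have e2 : v0 ⟨(a : ℕ) + 1, lt_of_le_of_lt (by omega) pm.isLt⟩ = v0 (a + 1) :=
          congrArg v0 (Fin.ext (by simp [hval]))
        rw [e1, e2]
        ring
      · rw [if_neg h]
        simp only [hf]
        rw [augZ_high v0 μ pm (by omega) (by omega), augZ_high v0 μ pm (by omega) (by omega)]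
        have e1 : v0 (⟨(a : ℕ) + 1 - 1, by omega⟩ : Fin n) = v0 a := congrArg v0 (Fin.ext (by simp))
        have e2 : v0 (⟨(a : ℕ) + 1 + 1 - 1, by omega⟩ : Fin n) = v0 (a + 1) :=
          congrArg v0 (Fin.ext (by simp [hval]))
        rw [e1, e2]
        ring
  rw [hsplit, hpair, hfP, hfP1, hbij]
  ring

/-- for the scalar (`l = 1`) cooperative learning protocol started
at time `t₀` from deterministic, strictly sorted initial values `v0` none of
which equals `μ`, with some value below and some above `μ`, if the union of the
graphs over the window `[t₀, t₁)` is connected and at least one measurement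
occurs in the window, then
`Σ_{m=t₀}^{t₁-1} [ Σ_{{k,l}∈E(m)} E[(v_k(m)-v_l(m))²] + Σ_{k∈S(m)} E[(v_k(m)-μ)²] ]
 ≥ (v0(p₋)-μ)² + (v0(p₊)-μ)² + Σ_{i≠p₋} (v0(i)-v0(i+1))²`,
where `p₋` (resp. `p₊`) is the largest (resp. smallest) index with `v0 < μ`
(resp. `v0 > μ`).  (Each unordered edge is counted once: the edge sum is written
as half the sum over ordered adjacent pairs.) -/
theorem stmt18 {Ω : Type*} [MeasureSpace Ω] [IsProbabilityMeasure (ℙ : Measure Ω)]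
    (n : ℕ) [NeZero n]
    (G : ℕ → SimpleGraph (Fin n)) [∀ t, DecidableRel (G t).Adj]
    (S : ℕ → Finset (Fin n))
    (μ σ σ' : ℝ)
    (t₀ t₁ : ℕ) (ht : t₀ < t₁)
    (we : ℕ → Fin n → Fin n → Ω → ℝ)
    (wm : ℕ → Fin n → Ω → ℝ)
    (hweMeas : ∀ t i j, t₀ ≤ t → (G t).Adj i j → Measurable (we t i j))
    (hwmMeas : ∀ t i, t₀ ≤ t → i ∈ S t → Measurable (wm t i))
    (hIndep : iIndepFun
      (Sum.elim
        (fun q : {p : ℕ × Fin n × Fin n // t₀ ≤ p.1 ∧ (G p.1).Adj p.2.1 p.2.2} =>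
          we q.1.1 q.1.2.1 q.1.2.2)
        (fun q : {p : ℕ × Fin n // t₀ ≤ p.1 ∧ p.2 ∈ S p.1} => wm q.1.1 q.1.2)) ℙ)
    (hweMean : ∀ t i j, t₀ ≤ t → (G t).Adj i j → ∫ ω, we t i j ω ∂ℙ = 0)
    (hwmMean : ∀ t i, t₀ ≤ t → i ∈ S t → ∫ ω, wm t i ω ∂ℙ = 0)
    (hweL2 : ∀ t i j, t₀ ≤ t → (G t).Adj i j → MemLp (we t i j) 2 ℙ)
    (hwmL2 : ∀ t i, t₀ ≤ t → i ∈ S t → MemLp (wm t i) 2 ℙ)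
    (hweVar : ∀ t i j, t₀ ≤ t → (G t).Adj i j → ∫ ω, (we t i j ω) ^ 2 ∂ℙ = σ' ^ 2)
    (hwmVar : ∀ t i, t₀ ≤ t → i ∈ S t → ∫ ω, (wm t i ω) ^ 2 ∂ℙ = σ ^ 2)
    (v : ℕ → Fin n → Ω → ℝ) (v0 : Fin n → ℝ)
    (hInit : ∀ i ω, v t₀ i ω = v0 i)
    (Δ : ℕ → ℝ) (hΔ : ∀ m, t₀ ≤ m → m < t₁ → 0 < Δ m ∧ Δ m < 1)
    (hDyn : ∀ t, t₀ ≤ t → ∀ i ω,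
      v (t + 1) i ω = v t i ω
        + (Δ t / 4) * (∑ j ∈ (G t).neighborFinset i,
            (((max ((G t).degree i) ((G t).degree j) : ℕ) : ℝ))⁻¹
              * (v t j ω - v t i ω + we t i j ω))
        + (if i ∈ S t then (Δ t / 4) * (μ + wm t i ω - v t i ω) else 0))
    (hConn : (⨆ m ∈ Finset.Ico t₀ t₁, G m).Connected)
    (hMeas : ∃ m, t₀ ≤ m ∧ m < t₁ ∧ (S m).Nonempty)
    (hSorted : StrictMono v0)
    (hNe : ∀ i, v0 i ≠ μ)
    (hBelow : ∃ i, v0 i < μ) (hAbove : ∃ i, μ < v0 i)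
    (pm pp : Fin n)
    (hpm : v0 pm < μ ∧ ∀ i, v0 i < μ → i ≤ pm)
    (hpp : μ < v0 pp ∧ ∀ i, μ < v0 i → pp ≤ i) :
    (v0 pm - μ) ^ 2 + (v0 pp - μ) ^ 2
        + ∑ i ∈ Finset.univ.filter (fun i : Fin n => (i : ℕ) + 1 < n ∧ i ≠ pm),
            (v0 i - v0 (i + 1)) ^ 2
      ≤ ∑ m ∈ Finset.Ico t₀ t₁,
          ((1 / 2) * ∑ k, ∑ l,
              (if (G m).Adj k l then ∫ ω, (v m k ω - v m l ω) ^ 2 ∂ℙ else 0)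
            + ∑ k ∈ S m, ∫ ω, (v m k ω - μ) ^ 2 ∂ℙ) := by
  classical
  have hn : 0 < n := Nat.pos_of_ne_zero (NeZero.ne n)
  -- index facts about pm, pp
  have hpmlt : pm < pp := by
    by_contra h
    push_neg at h
    have := hSorted.monotone h
    have h1 := hpm.1
    have h2 := hpp.1
    linarith
  have hP1n : (pm : ℕ) + 1 < n := by
    have h1 := pp.isLt
    have h2 : (pm : ℕ) < (pp : ℕ) := hpmlt
    omega
  have hppm : (pp : ℕ) = (pm : ℕ) + 1 := by
    have hle : pp ≤ (⟨(pm : ℕ) + 1, hP1n⟩ : Fin n) := by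
      apply hpp.2
      rcases lt_trichotomy (v0 (⟨(pm : ℕ) + 1, hP1n⟩ : Fin n)) μ with h | h | h
      · exfalso
        have h2 := hpm.2 _ h
        rw [Fin.le_def] at h2
        simp only at h2
        omega
      · exact absurd h (hNe _)
      · exact h
    rw [Fin.le_def] at hle
    simp only at hle
    have h2 : (pm : ℕ) < (pp : ℕ) := hpmlt
    omega
  -- integrability infrastructure
  have hweInt : ∀ t i j, t₀ ≤ t → (G t).Adj i j → Integrable (we t i j) ℙ :=
    fun t i j ht' hadj => (hweL2 t i j ht' hadj).integrable one_le_two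
  have hwmInt : ∀ t i, t₀ ≤ t → i ∈ S t → Integrable (wm t i) ℙ :=
    fun t i ht' hS => (hwmL2 t i ht' hS).integrable one_le_two
  have hL2 : ∀ t, t₀ ≤ t → ∀ i, MemLp (v t i) 2 ℙ := by
    intro t ht'
    induction t, ht' using Nat.le_induction with
    | base =>
      intro i
      have hfun : v t₀ i = fun _ : Ω => v0 i := funext (hInit i)
      rw [hfun]
      exact memLp_const _
    | succ t ht' ih =>
      intro i
      have hfun : v (t + 1) i = fun ω => v t i ω
          + (Δ t / 4) * (∑ j ∈ (G t).neighborFinset i,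
              (((max ((G t).degree i) ((G t).degree j) : ℕ) : ℝ))⁻¹
                * (v t j ω - v t i ω + we t i j ω))
          + (if i ∈ S t then (Δ t / 4) * (μ + wm t i ω - v t i ω) else 0) :=
        funext (hDyn t ht' i)
      rw [hfun]
      apply MemLp.add
      apply MemLp.add (ih i)
      · apply MemLp.const_mul
        apply memLp_finset_sum
        intro j hj
        have hadj := (SimpleGraph.mem_neighborFinset _ _ _).mp hj
        exact (((ih j).sub (ih i)).add (hweL2 t i j ht' hadj)).const_mul _
      · by_cases hS : i ∈ S t
        · simp only [hS, if_true]
          exact (((memLp_const μ).add (hwmL2 t i ht' hS)).sub (ih i)).const_mul _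
        · simp only [hS, if_false]
          exact memLp_const 0
  have hInt : ∀ t, t₀ ≤ t → ∀ i, Integrable (v t i) ℙ :=
    fun t ht' i => (hL2 t ht' i).integrable one_le_two
  -- initial means
  have hInitU : ∀ i : Fin n, (∫ ω, v t₀ i ω ∂ℙ) = v0 i := by
    intro i
    have hfun : v t₀ i = fun _ : Ω => v0 i := funext (hInit i)
    rw [hfun, integral_const]
    simp
  -- mean dynamics
  have hDynU : ∀ t, t₀ ≤ t → ∀ i : Fin n,
      (∫ ω, v (t + 1) i ω ∂ℙ) = (∫ ω, v t i ω ∂ℙ)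
        + (Δ t / 4) * (∑ j ∈ (G t).neighborFinset i,
            (((max ((G t).degree i) ((G t).degree j) : ℕ) : ℝ))⁻¹
              * ((∫ ω, v t j ω ∂ℙ) - (∫ ω, v t i ω ∂ℙ)))
        + (if i ∈ S t then (Δ t / 4) * (μ - (∫ ω, v t i ω ∂ℙ)) else 0) := by
    intro t ht' i
    have hint1 : Integrable (v t i) ℙ := hInt t ht' i
    have hintj : ∀ j ∈ (G t).neighborFinset i,
        Integrable (fun ω => (((max ((G t).degree i) ((G t).degree j) : ℕ) : ℝ))⁻¹
          * (v t j ω - v t i ω + we t i j ω)) ℙ := by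
      intro j hj
      have hadj := (SimpleGraph.mem_neighborFinset _ _ _).mp hj
      exact (((hInt t ht' j).sub hint1).add (hweInt t i j ht' hadj)).const_mul _
    have hint2 : Integrable (fun ω => (Δ t / 4) * (∑ j ∈ (G t).neighborFinset i,
        (((max ((G t).degree i) ((G t).degree j) : ℕ) : ℝ))⁻¹
          * (v t j ω - v t i ω + we t i j ω))) ℙ :=
      (integrable_finset_sum _ hintj).const_mul _
    have hint12 : Integrable (fun ω => v t i ω + (Δ t / 4) * (∑ j ∈ (G t).neighborFinset i,
        (((max ((G t).degree i) ((G t).degree j) : ℕ) : ℝ))⁻¹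
          * (v t j ω - v t i ω + we t i j ω))) ℙ := hint1.add hint2
    have hint3 : Integrable
        (fun ω => (if i ∈ S t then (Δ t / 4) * (μ + wm t i ω - v t i ω) else 0)) ℙ := by
      by_cases hS : i ∈ S t
      · simp only [hS, if_true]
        exact (((integrable_const μ).add (hwmInt t i ht' hS)).sub hint1).const_mul _
      · simp only [hS, if_false]
        exact integrable_const 0
    have hfun : v (t + 1) i = fun ω => (v t i ω
        + (Δ t / 4) * (∑ j ∈ (G t).neighborFinset i,
            (((max ((G t).degree i) ((G t).degree j) : ℕ) : ℝ))⁻¹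
              * (v t j ω - v t i ω + we t i j ω)))
        + (if i ∈ S t then (Δ t / 4) * (μ + wm t i ω - v t i ω) else 0) :=
      funext (hDyn t ht' i)
    rw [hfun, integral_add hint12 hint3, integral_add hint1 hint2]
    congr 1
    · congr 1
      rw [integral_const_mul, integral_finset_sum _ hintj]
      congr 1
      apply Finset.sum_congr rfl
      intro j hj
      have hadj := (SimpleGraph.mem_neighborFinset _ _ _).mp hj
      rw [integral_const_mul]
      congr 1
      have hsubji : Integrable (fun ω => v t j ω - v t i ω) ℙ := (hInt t ht' j).sub hint1
      rw [integral_add hsubji (hweInt t i j ht' hadj),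
        integral_sub (hInt t ht' j) hint1, hweMean t i j ht' hadj, add_zero]
    · by_cases hS : i ∈ S t
      · simp only [hS, if_true]
        rw [integral_const_mul]
        congr 1
        have hμwm : Integrable (fun ω => μ + wm t i ω) ℙ :=
          (integrable_const μ).add (hwmInt t i ht' hS)
        rw [integral_sub hμwm hint1,
          integral_add (integrable_const μ) (hwmInt t i ht' hS),
          hwmMean t i ht' hS, add_zero, integral_const]
        simp
      · simp only [hS, if_false]
        exact integral_zero _ _
  -- variance bounds
  have hVar2 : ∀ m, t₀ ≤ m → ∀ k l : Fin n,
      ((∫ ω, v m k ω ∂ℙ) - (∫ ω, v m l ω ∂ℙ))^2 ≤ ∫ ω, (v m k ω - v m l ω)^2 ∂ℙ := by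
    intro m hm k l
    have hX : MemLp (fun ω => v m k ω - v m l ω) 2 ℙ := (hL2 m hm k).sub (hL2 m hm l)
    have hvar := variance_nonneg (fun ω => v m k ω - v m l ω) ℙ
    rw [variance_eq_sub hX] at hvar
    have hEX : (∫ ω, (v m k ω - v m l ω) ∂ℙ) = (∫ ω, v m k ω ∂ℙ) - (∫ ω, v m l ω ∂ℙ) :=
      integral_sub (hInt m hm k) (hInt m hm l)
    have hE2 : (∫ ω, ((fun ω => v m k ω - v m l ω) ^ 2) ω ∂ℙ)
        = ∫ ω, (v m k ω - v m l ω)^2 ∂ℙ := rfl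
    rw [hE2, hEX] at hvar
    linarith
  have hVarM : ∀ m, t₀ ≤ m → ∀ k : Fin n,
      ((∫ ω, v m k ω ∂ℙ) - μ)^2 ≤ ∫ ω, (v m k ω - μ)^2 ∂ℙ := by
    intro m hm k
    have hX : MemLp (fun ω => v m k ω - μ) 2 ℙ := (hL2 m hm k).sub (memLp_const μ)
    have hvar := variance_nonneg (fun ω => v m k ω - μ) ℙ
    rw [variance_eq_sub hX] at hvar
    have hEX : (∫ ω, (v m k ω - μ) ∂ℙ) = (∫ ω, v m k ω ∂ℙ) - μ := by
      rw [integral_sub (hInt m hm k) (integrable_const μ), integral_const]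
      simp
    have hE2 : (∫ ω, ((fun ω => v m k ω - μ) ^ 2) ω ∂ℙ)
        = ∫ ω, (v m k ω - μ)^2 ∂ℙ := rfl
    rw [hE2, hEX] at hvar
    linarith
  -- deterministic result for the means
  have hmono : ∀ j k, j < k → k ≤ n → augZ v0 μ pm j < augZ v0 μ pm k :=
    aux_mono_of_step (aux_augZ_step v0 μ hSorted pm pp hpm.1 hpp.1 hppm)
  have hlev' : ∀ i : Fin n, ∃ e, e ≤ n ∧ augZ v0 μ pm e = (∫ ω, v t₀ i ω ∂ℙ) := by
    intro i
    obtain ⟨e, he, heq⟩ := aux_augZ_lev v0 μ pm i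
    exact ⟨e, he, heq.trans (hInitU i).symm⟩
  have hμlev' : ∃ e, e ≤ n ∧ augZ v0 μ pm e = μ := aux_augZ_μlev v0 μ pm hP1n
  have hlo' : ∀ j, j < n → ∃ i : Fin n, (∫ ω, v t₀ i ω ∂ℙ) ≤ augZ v0 μ pm j := by
    intro j hj
    obtain ⟨i, hi⟩ := aux_augZ_lo v0 μ pm hpm.1 j hj
    exact ⟨i, by rw [hInitU i]; exact hi⟩
  have hhi' : ∀ j, j < n → ∃ i : Fin n, augZ v0 μ pm (j + 1) ≤ (∫ ω, v t₀ i ω ∂ℙ) := by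
    intro j hj
    obtain ⟨i, hi⟩ := aux_augZ_hi v0 μ pm pp hpp.1 hppm j hj
    exact ⟨i, by rw [hInitU i]; exact hi⟩
  have hdet : ∑ j ∈ Finset.range n, (augZ v0 μ pm (j + 1) - augZ v0 μ pm j)^2
      ≤ ∑ m ∈ Finset.Ico t₀ t₁,
          ((1/2) * ∑ k, ∑ l, (if (G m).Adj k l then
              ((∫ ω, v m k ω ∂ℙ) - (∫ ω, v m l ω ∂ℙ))^2 else 0)
            + ∑ k ∈ S m, ((∫ ω, v m k ω ∂ℙ) - μ)^2) :=
    aux_det_main hn G S μ t₀ t₁ (fun t i => ∫ ω, v t i ω ∂ℙ) Δ hΔ hDynU hConn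
      (augZ v0 μ pm) hmono hlev' hμlev' hlo' hhi'
  -- final chain
  calc (v0 pm - μ) ^ 2 + (v0 pp - μ) ^ 2
        + ∑ i ∈ Finset.univ.filter (fun i : Fin n => (i : ℕ) + 1 < n ∧ i ≠ pm),
            (v0 i - v0 (i + 1)) ^ 2
      = ∑ j ∈ Finset.range n, (augZ v0 μ pm (j + 1) - augZ v0 μ pm j)^2 :=
        aux_lhs_eq v0 μ pm pp hppm
    _ ≤ ∑ m ∈ Finset.Ico t₀ t₁,
          ((1/2) * ∑ k, ∑ l, (if (G m).Adj k l then
              ((∫ ω, v m k ω ∂ℙ) - (∫ ω, v m l ω ∂ℙ))^2 else 0)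
            + ∑ k ∈ S m, ((∫ ω, v m k ω ∂ℙ) - μ)^2) := hdet
    _ ≤ ∑ m ∈ Finset.Ico t₀ t₁,
          ((1 / 2) * ∑ k, ∑ l,
              (if (G m).Adj k l then ∫ ω, (v m k ω - v m l ω) ^ 2 ∂ℙ else 0)
            + ∑ k ∈ S m, ∫ ω, (v m k ω - μ) ^ 2 ∂ℙ) := by
        apply Finset.sum_le_sum
        intro m hm
        obtain ⟨hm1, hm2⟩ := Finset.mem_Ico.mp hm
        apply add_le_add
        · apply mul_le_mul_of_nonneg_left _ (by norm_num : (0:ℝ) ≤ 1/2)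
          apply Finset.sum_le_sum
          intro k _
          apply Finset.sum_le_sum
          intro l _
          by_cases h : (G m).Adj k l
          · simp only [h, if_true]
            exact hVar2 m hm1 k l
          · simp only [h, if_false]
            exact le_refl 0
        · apply Finset.sum_le_sum
          intro k _
          exact hVarM m hm1 k
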